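/- Let z₁ and z₂ be nonzero rational numbers, and set t = (z₁ + 1/z₁ + z₂ + 1/z₂)/4 and x = −(z₁+z₂)²/(4z₁z₂). Then x(x+1)(x+t²) is the square of a rational number. Moreover, if z₁ ≠ ±1, z₂ ≠ ±1, z₁ ≠ ±z₂ and z₁ ≠ 1/z₂, then x ∉ {0, −1, −t², t, −t}, so this produces a non-trivial rational point on the curve y² = x(x+1)(x+t²). -/

import Mathlib

/-- For nonzero rationals `z₁, z₂`, with `t = (z₁ + 1/z₁ + z₂ + 1/z₂)/4` and
`x = -(z₁ + z₂)²/(4 z₁ z₂)`, the quantity `x (x + 1) (x + t²)` is a rational square;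
moreover, under the indicated non-degeneracy conditions, `x` avoids the `x`-coordinates
`0, -1, -t², t, -t` of the trivial points of `y² = x (x + 1) (x + t²)`. -/
theorem nontrivial_point_family (z₁ z₂ : ℚ) (h₁ : z₁ ≠ 0) (h₂ : z₂ ≠ 0)
    (t x : ℚ) (htdef : t = (z₁ + 1 / z₁ + z₂ + 1 / z₂) / 4)
    (hxdef : x = -(z₁ + z₂) ^ 2 / (4 * z₁ * z₂)) :
    (∃ w : ℚ, x * (x + 1) * (x + t ^ 2) = w ^ 2) ∧
    (z₁ ≠ 1 → z₁ ≠ -1 → z₂ ≠ 1 → z₂ ≠ -1 → z₁ ≠ z₂ → z₁ ≠ -z₂ → z₁ ≠ 1 / z₂ →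
      x ≠ 0 ∧ x ≠ -1 ∧ x ≠ -t ^ 2 ∧ x ≠ t ∧ x ≠ -t) := by
  subst htdef hxdef
  constructor
  · refine ⟨(z₁ + z₂) ^ 2 * (z₁ - z₂) * (z₁ * z₂ - 1) / (16 * z₁ ^ 2 * z₂ ^ 2), ?_⟩
    field_simp
    ring
  · intro hz1 hz1' hz2 hz2' hne hne' hinv
    have hs : z₁ + z₂ ≠ 0 := fun h => hne' (by linarith)
    have hd : z₁ - z₂ ≠ 0 := sub_ne_zero.mpr hne
    have hp : z₁ * z₂ - 1 ≠ 0 := by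
      intro h
      apply hinv
      field_simp
      linarith
    have ha : z₁ + 1 ≠ 0 := fun h => hz1' (by linarith)
    have hb : z₂ + 1 ≠ 0 := fun h => hz2' (by linarith)
    have hc : z₁ - 1 ≠ 0 := sub_ne_zero.mpr hz1
    have hd2 : z₂ - 1 ≠ 0 := sub_ne_zero.mpr hz2
    refine ⟨?_, ?_, ?_, ?_, ?_⟩
    · intro h
      rw [div_eq_zero_iff] at h
      rcases h with h | h
      · exact hs (by nlinarith [sq_nonneg (z₁ + z₂)])
      · simp [h₁, h₂] at h
    · intro h
      field_simp at h
      have key : (z₁ - z₂) ^ 2 = 0 := by linear_combination -h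
      exact hd (sq_eq_zero_iff.mp key)
    · intro h
      field_simp at h
      have key : ((z₁ + z₂) * (z₁ * z₂ - 1)) ^ 2 * (4 * z₁ * z₂) = 0 := by
        linear_combination (4 * z₁ * z₂) * h
      rcases mul_eq_zero.mp key with h' | h'
      · rcases mul_eq_zero.mp (sq_eq_zero_iff.mp h') with h'' | h''
        · exact hs h''
        · exact hp h''
      · simp [h₁, h₂] at h'
    · intro h
      field_simp at h
      have key : (z₁ + z₂) * ((z₁ + 1) * (z₂ + 1)) * (4 * z₁ * z₂) = 0 := by
        linear_combination -(4 * z₁ * z₂) * h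
      rcases mul_eq_zero.mp key with h' | h'
      · rcases mul_eq_zero.mp h' with h'' | h''
        · exact hs h''
        · rcases mul_eq_zero.mp h'' with h3 | h3
          · exact ha h3
          · exact hb h3
      · simp [h₁, h₂] at h'
    · intro h
      field_simp at h
      have key : (z₁ + z₂) * ((z₁ - 1) * (z₂ - 1)) * (4 * z₁ * z₂) = 0 := by
        linear_combination (4 * z₁ * z₂) * h
      rcases mul_eq_zero.mp key with h' | h'
      · rcases mul_eq_zero.mp h' with h'' | h''
        · exact hs h''
        · rcases mul_eq_zero.mp h'' with h3 | h3
          · exact hc h3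
          · exact hd2 h3
      · simp [h₁, h₂] at h'
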